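/- arXiv:2501.09243 — 11 statements merged into one kernel-verified Lean document; each statement's English description precedes it below -/
import Mathlib

section
/- Let & be a left continuous t-norm on [0,1] (a commutative, associative, monotone binary operation with unit 1 that preserves suprema in each variable). If for all p,q,u in [0,1] we have (p&q) ∧ u = ((p∧u)&q) ∨ (p&(q∧u)), then for all p,u in [0,1], u ≤ p&p implies u&p = u. -/
instance : Fact ((0:ℝ) ≤ 1) := ⟨zero_le_one⟩

open unitInterval

theorem stmt0 (op : I → I → I)
    (hcomm : ∀ x y, op x y = op y x)
    (hassoc : ∀ x y z, op (op x y) z = op x (op y z))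
    (hmono : ∀ x y z w, x ≤ y → z ≤ w → op x z ≤ op y w)
    (hone : ∀ x, op 1 x = x)
    (hlc : ∀ (x : I) (S : Set I), op x (sSup S) = sSup (op x '' S))
    (hdist : ∀ p q u, op p q ⊓ u = op (p ⊓ u) q ⊔ op p (q ⊓ u)) :
    ∀ p u : I, u ≤ op p p → op u p = u := by
  intro p u h
  have key : op (p ⊓ u) p = u := by
    have hd := hdist p p u
    rw [inf_eq_right.mpr h, hcomm p (p ⊓ u), sup_idem] at hd
    exact hd.symm
  rcases le_total u p with hup | hpu
  · rwa [inf_eq_right.mpr hup] at key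
  · rw [inf_eq_left.mpr hpu] at key
    have hle : op p p ≤ p := by
      calc op p p ≤ op 1 p := hmono p 1 p p le_one' le_rfl
      _ = p := hone p
    have : u = p := le_antisymm (key ▸ hle) hpu
    rw [this] at key ⊢; exact key
end

section
/- Let & be a left continuous t-norm on [0,1], and let a be an idempotent element of &. Define â = sup{x ∈ [0,1] : x&x = a}. Then â & â = a, i.e. â is the largest element whose &-square equals a. -/
open unitInterval

theorem stmt2 (op : I → I → I)
    (hcomm : ∀ x y, op x y = op y x)
    (hassoc : ∀ x y z, op (op x y) z = op x (op y z))
    (hmono : ∀ x y z w, x ≤ y → z ≤ w → op x z ≤ op y w)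
    (hone : ∀ x, op 1 x = x)
    (hlc : ∀ (x : I) (S : Set I), op x (sSup S) = sSup (op x '' S))
    (hcond : ∀ p u : I, u ≤ op p p → op u p = u)
    (a : I) (ha : op a a = a) :
    op (sSup {x : I | op x x = a}) (sSup {x : I | op x x = a}) = a ∧
      ∀ x : I, op x x = a → x ≤ sSup {x : I | op x x = a} := by
  set S : Set I := {x : I | op x x = a} with hS
  have haS : a ∈ S := ha
  have key : ∀ x ∈ S, ∀ y ∈ S, op x y = a := by
    intro x hx y hy
    rcases le_total x y with h | h
    · refine le_antisymm ?_ ?_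
      · calc op x y ≤ op y y := hmono _ _ _ _ h le_rfl
          _ = a := hy
      · calc a = op x x := hx.symm
          _ ≤ op x y := hmono _ _ _ _ le_rfl h
    · refine le_antisymm ?_ ?_
      · calc op x y ≤ op x x := hmono _ _ _ _ le_rfl h
          _ = a := hx
      · calc a = op y y := hy.symm
          _ ≤ op x y := hmono _ _ _ _ h le_rfl
  have himg : ∀ x ∈ S, op x '' S = {a} := by
    intro x hx
    apply Set.eq_singleton_iff_unique_mem.mpr
    constructor
    · exact ⟨a, haS, key x hx a haS⟩
    · rintro y ⟨z, hz, rfl⟩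
      exact key x hx z hz
  have hsup : ∀ x ∈ S, op (sSup S) x = a := by
    intro x hx
    rw [hcomm, hlc, himg x hx, sSup_singleton]
  have himg2 : op (sSup S) '' S = {a} := by
    apply Set.eq_singleton_iff_unique_mem.mpr
    exact ⟨⟨a, haS, hsup a haS⟩, by rintro y ⟨z, hz, rfl⟩; exact hsup z hz⟩
  constructor
  · rw [hlc, himg2, sSup_singleton]
  · intro x hx
    exact le_sSup hx
end

section
/- Let & be a left continuous t-norm on [0,1] such that for all p,u ∈ [0,1], u ≤ p&p implies u&p = u. If a < b are two idempotent elements, and â = sup{x : x&x = a}, b̂ = sup{x : x&x = b}, then â < b, and consequently the intervals [a,â] and [b,b̂] are disjoint. -/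
open unitInterval

theorem stmt3 (op : I → I → I)
    (hcomm : ∀ x y, op x y = op y x)
    (hassoc : ∀ x y z, op (op x y) z = op x (op y z))
    (hmono : ∀ x y z w, x ≤ y → z ≤ w → op x z ≤ op y w)
    (hone : ∀ x, op 1 x = x)
    (hlc : ∀ (x : I) (S : Set I), op x (sSup S) = sSup (op x '' S))
    (hcond : ∀ p u : I, u ≤ op p p → op u p = u)
    (a b : I) (ha : op a a = a) (hb : op b b = b) (hab : a < b) :
    sSup {x : I | op x x = a} < b ∧
      Set.Icc a (sSup {x : I | op x x = a}) ∩
        Set.Icc b (sSup {x : I | op x x = b}) = ∅ := by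
  set S : Set I := {x : I | op x x = a} with hS
  have haS : a ∈ S := ha
  have hle : ∀ x ∈ S, ∀ y ∈ S, op x y ≤ a := by
    intro x hx y hy
    rcases le_total x y with h | h
    · calc op x y ≤ op y y := hmono _ _ _ _ h le_rfl
        _ = a := hy
    · calc op x y ≤ op x x := hmono _ _ _ _ le_rfl h
        _ = a := hx
  have key : ∀ y ∈ S, op y (sSup S) = a := by
    intro y hy
    rw [hlc]
    apply le_antisymm
    · apply sSup_le; rintro _ ⟨x, hx, rfl⟩; exact hle y hy x hx
    · exact le_sSup ⟨y, hy, hy⟩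
  have hss : op (sSup S) (sSup S) = a := by
    rw [hlc]
    apply le_antisymm
    · apply sSup_le; rintro _ ⟨x, hx, rfl⟩
      rw [hcomm]; exact (key x hx).le
    · exact le_sSup ⟨a, haS, by rw [hcomm]; exact key a haS⟩
  have h1 : sSup S < b := by
    by_contra h
    push_neg at h
    have : b ≤ a := by
      calc b = op b b := hb.symm
        _ ≤ op (sSup S) (sSup S) := hmono _ _ _ _ h h
        _ = a := hss
    exact absurd hab (not_lt.2 this)
  refine ⟨h1, ?_⟩
  rw [Set.eq_empty_iff_forall_notMem]
  rintro x ⟨⟨_, hx2⟩, ⟨hx3, _⟩⟩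
  exact absurd (hx3.trans hx2) (not_le.2 h1)
end

section
/- Let {[aᵢ,bᵢ] ⊆ [0,1)}ᵢ∈I be a family of pairwise disjoint closed intervals, and define p & q = aᵢ if p,q ∈ [aᵢ,bᵢ] for some i ∈ I, and p & q = min(p,q) otherwise. Then & is commutative, associative, monotone in each argument, and has 1 as a unit. -/
open unitInterval

theorem stmt4 {ι : Type*} (a b : ι → I)
    (hab : ∀ i, a i ≤ b i) (hb1 : ∀ i, b i < 1)
    (hdisj : ∀ i j, i ≠ j → Set.Icc (a i) (b i) ∩ Set.Icc (a j) (b j) = ∅)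
    (op : I → I → I)
    (hin : ∀ i p q, p ∈ Set.Icc (a i) (b i) → q ∈ Set.Icc (a i) (b i) → op p q = a i)
    (hout : ∀ p q : I, (¬ ∃ i, p ∈ Set.Icc (a i) (b i) ∧ q ∈ Set.Icc (a i) (b i)) →
      op p q = p ⊓ q) :
    (∀ x y, op x y = op y x) ∧
    (∀ x y z, op (op x y) z = op x (op y z)) ∧
    (∀ x y z w, x ≤ y → z ≤ w → op x z ≤ op y w) ∧
    (∀ x, op 1 x = x ∧ op x 1 = x) := by
  have huniq : ∀ {i j : ι} {p : I}, p ∈ Set.Icc (a i) (b i) → p ∈ Set.Icc (a j) (b j) →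
      i = j := by
    intro i j p hp hq
    by_contra h
    have := hdisj i j h
    have : p ∈ (∅ : Set I) := this ▸ Set.mem_inter hp hq
    exact this.elim
  have hamem : ∀ i : ι, a i ∈ Set.Icc (a i) (b i) := fun i => ⟨le_rfl, hab i⟩
  have hcomm : ∀ x y, op x y = op y x := by
    intro x y
    by_cases h : ∃ i, x ∈ Set.Icc (a i) (b i) ∧ y ∈ Set.Icc (a i) (b i)
    · obtain ⟨i, hx, hy⟩ := h
      rw [hin i x y hx hy, hin i y x hy hx]
    · have h' : ¬ ∃ i, y ∈ Set.Icc (a i) (b i) ∧ x ∈ Set.Icc (a i) (b i) := by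
        rintro ⟨i, hy, hx⟩; exact h ⟨i, hx, hy⟩
      rw [hout x y h, hout y x h', inf_comm]
  -- associativity when x, y lie in a common interval
  have caseA : ∀ (x y z : I) (i : ι), x ∈ Set.Icc (a i) (b i) → y ∈ Set.Icc (a i) (b i) →
      op (op x y) z = op x (op y z) := by
    intro x y z i hx hy
    rw [hin i x y hx hy]
    by_cases hz : z ∈ Set.Icc (a i) (b i)
    · rw [hin i (a i) z (hamem i) hz, hin i y z hy hz, hin i x (a i) hx (hamem i)]
    · have hPaz : ¬ ∃ j, a i ∈ Set.Icc (a j) (b j) ∧ z ∈ Set.Icc (a j) (b j) := by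
        rintro ⟨j, haj, hzj⟩
        have hij : i = j := huniq (hamem i) haj
        exact hz (hij ▸ hzj)
      have hPyz : ¬ ∃ j, y ∈ Set.Icc (a j) (b j) ∧ z ∈ Set.Icc (a j) (b j) := by
        rintro ⟨j, hyj, hzj⟩
        have hij : i = j := huniq hy hyj
        exact hz (hij ▸ hzj)
      rw [hout (a i) z hPaz, hout y z hPyz]
      rcases le_or_gt y z with hyz | hyz
      · rw [inf_eq_left.2 hyz, hin i x y hx hy]
        exact inf_eq_left.2 (hy.1.trans hyz)
      · have hz' : z < a i := by
          by_contra h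
          push_neg at h
          exact hz ⟨h, hyz.le.trans hy.2⟩
        have hPxz : ¬ ∃ j, x ∈ Set.Icc (a j) (b j) ∧ z ∈ Set.Icc (a j) (b j) := by
          rintro ⟨j, hxj, hzj⟩
          have hij : i = j := huniq hx hxj
          exact hz (hij ▸ hzj)
        rw [inf_eq_right.2 hyz.le, hout x z hPxz,
          inf_eq_right.2 hz'.le, inf_eq_right.2 (hz'.le.trans hx.1)]
  refine ⟨hcomm, ?_, ?_, ?_⟩
  · -- associativity
    intro x y z
    by_cases hxy : ∃ i, x ∈ Set.Icc (a i) (b i) ∧ y ∈ Set.Icc (a i) (b i)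
    · obtain ⟨i, hx, hy⟩ := hxy
      exact caseA x y z i hx hy
    · by_cases hyz : ∃ i, y ∈ Set.Icc (a i) (b i) ∧ z ∈ Set.Icc (a i) (b i)
      · obtain ⟨i, hy, hz⟩ := hyz
        calc op (op x y) z = op z (op y x) := by rw [hcomm (op x y) z, hcomm x y]
          _ = op (op z y) x := (caseA z y x i hz hy).symm
          _ = op x (op y z) := by rw [hcomm (op z y) x, hcomm z y]
      · rw [hout x y hxy, hout y z hyz]
        by_cases h1 : ∃ i, x ⊓ y ∈ Set.Icc (a i) (b i) ∧ z ∈ Set.Icc (a i) (b i)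
        · obtain ⟨i, hm, hz⟩ := h1
          rw [hin i (x ⊓ y) z hm hz]
          rcases le_total x y with hle | hle
          · rw [inf_eq_left.2 hle] at hm
            rcases le_total y z with h2 | h2
            · exact absurd ⟨i, hm, ⟨hm.1.trans hle, h2.trans hz.2⟩⟩ hxy
            · rw [inf_eq_right.2 h2, hin i x z hm hz]
          · rw [inf_eq_right.2 hle] at hm
            exact absurd ⟨i, hm, hz⟩ hyz
        · rw [hout (x ⊓ y) z h1]
          by_cases h2 : ∃ i, x ∈ Set.Icc (a i) (b i) ∧ y ⊓ z ∈ Set.Icc (a i) (b i)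
          · exfalso
            obtain ⟨i, hx, hm⟩ := h2
            rcases le_total y z with hle | hle
            · rw [inf_eq_left.2 hle] at hm
              exact hxy ⟨i, hx, hm⟩
            · rw [inf_eq_right.2 hle] at hm
              rcases le_total x y with h3 | h3
              · exact h1 ⟨i, by rw [inf_eq_left.2 h3]; exact hx, hm⟩
              · exact hxy ⟨i, hx, ⟨hm.1.trans hle, h3.trans hx.2⟩⟩
          · rw [hout x (y ⊓ z) h2, inf_assoc]
  · -- monotonicity
    intro x y z w hxy hzw
    by_cases h1 : ∃ i, x ∈ Set.Icc (a i) (b i) ∧ z ∈ Set.Icc (a i) (b i)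
    · obtain ⟨i, hx, hz⟩ := h1
      rw [hin i x z hx hz]
      by_cases h2 : ∃ j, y ∈ Set.Icc (a j) (b j) ∧ w ∈ Set.Icc (a j) (b j)
      · obtain ⟨j, hy, hw⟩ := h2
        rw [hin j y w hy hw]
        by_contra h
        push_neg at h
        have hmem : a i ∈ Set.Icc (a j) (b j) :=
          ⟨h.le, (hx.1.trans hxy).trans hy.2⟩
        have hij : i = j := huniq (hamem i) hmem
        subst hij
        exact absurd h (lt_irrefl _)
      · rw [hout y w h2]
        exact le_inf (hx.1.trans hxy) (hz.1.trans hzw)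
    · rw [hout x z h1]
      by_cases h2 : ∃ j, y ∈ Set.Icc (a j) (b j) ∧ w ∈ Set.Icc (a j) (b j)
      · obtain ⟨j, hy, hw⟩ := h2
        rw [hin j y w hy hw]
        by_contra h
        push_neg at h
        exact h1 ⟨j, ⟨(h.trans_le inf_le_left).le, hxy.trans hy.2⟩,
          ⟨(h.trans_le inf_le_right).le, hzw.trans hw.2⟩⟩
      · rw [hout y w h2]
        exact inf_le_inf hxy hzw
  · -- unit
    intro x
    have hx1 : x ≤ 1 := le_one x
    have hne : ∀ p : I, ¬ ∃ i, (1 : I) ∈ Set.Icc (a i) (b i) ∧ p ∈ Set.Icc (a i) (b i) := by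
      rintro p ⟨i, h1', _⟩
      exact absurd h1'.2 (not_le.2 (hb1 i))
    have hne' : ¬ ∃ i, x ∈ Set.Icc (a i) (b i) ∧ (1 : I) ∈ Set.Icc (a i) (b i) := by
      rintro ⟨i, _, h1'⟩
      exact absurd h1'.2 (not_le.2 (hb1 i))
    constructor
    · rw [hout 1 x (hne x)]
      exact inf_eq_right.2 hx1
    · rw [hout x 1 hne']
      exact inf_eq_left.2 hx1
end

section
/- Let {[aᵢ,bᵢ] ⊆ [0,1)}ᵢ∈I be a family of pairwise disjoint closed intervals, and define p & q = aᵢ if p,q ∈ [aᵢ,bᵢ] for some i ∈ I, and p & q = min(p,q) otherwise. Then for all p,q,u ∈ [0,1], (p&q) ∧ u = ((p∧u)&q) ∨ (p&(q∧u)). -/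
open unitInterval

theorem stmt5 {ι : Type*} (a b : ι → I)
    (hab : ∀ i, a i ≤ b i) (hb1 : ∀ i, b i < 1)
    (hdisj : ∀ i j, i ≠ j → Set.Icc (a i) (b i) ∩ Set.Icc (a j) (b j) = ∅)
    (op : I → I → I)
    (hin : ∀ i p q, p ∈ Set.Icc (a i) (b i) → q ∈ Set.Icc (a i) (b i) → op p q = a i)
    (hout : ∀ p q : I, (¬ ∃ i, p ∈ Set.Icc (a i) (b i) ∧ q ∈ Set.Icc (a i) (b i)) →
      op p q = p ⊓ q) :
    ∀ p q u : I, op p q ⊓ u = op (p ⊓ u) q ⊔ op p (q ⊓ u) := by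
  have hle : ∀ p q : I, op p q ≤ p ⊓ q := by
    intro p q
    by_cases h : ∃ i, p ∈ Set.Icc (a i) (b i) ∧ q ∈ Set.Icc (a i) (b i)
    · obtain ⟨i, hp, hq⟩ := h
      rw [hin i p q hp hq]
      exact le_inf hp.1 hq.1
    · rw [hout p q h]
  have hne : ∀ j k, j ≠ k → ∀ x : I, x ∈ Set.Icc (a j) (b j) →
      x ∉ Set.Icc (a k) (b k) := by
    intro j k hjk x hxj hxk
    have := hdisj j k hjk
    exact absurd (Set.mem_inter hxj hxk) (by rw [this]; exact id)
  intro p q u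
  by_cases h : ∃ i, p ∈ Set.Icc (a i) (b i) ∧ q ∈ Set.Icc (a i) (b i)
  · obtain ⟨i, hp, hq⟩ := h
    rw [hin i p q hp hq]
    rcases le_or_gt (a i) u with hau | hau
    · rcases le_or_gt u (b i) with hub | hub
      · have h1 : p ⊓ u ∈ Set.Icc (a i) (b i) :=
          ⟨le_inf hp.1 hau, inf_le_of_left_le hp.2⟩
        have h2 : q ⊓ u ∈ Set.Icc (a i) (b i) :=
          ⟨le_inf hq.1 hau, inf_le_of_left_le hq.2⟩
        rw [hin i _ q h1 hq, hin i p _ hp h2, inf_eq_left.mpr hau, sup_idem]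
      · have hpu : p ⊓ u = p := inf_eq_left.mpr (hp.2.trans hub.le)
        have hqu : q ⊓ u = q := inf_eq_left.mpr (hq.2.trans hub.le)
        rw [hpu, hqu, hin i p q hp hq, inf_eq_left.mpr hau, sup_idem]
    · have hpu : p ⊓ u = u := inf_eq_right.mpr (hau.le.trans hp.1)
      have hqu : q ⊓ u = u := inf_eq_right.mpr (hau.le.trans hq.1)
      have hnot1 : ¬ ∃ j, u ∈ Set.Icc (a j) (b j) ∧ q ∈ Set.Icc (a j) (b j) := by
        rintro ⟨j, huj, hqj⟩
        rcases eq_or_ne j i with rfl | hji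
        · exact absurd huj.1 (not_le.mpr hau)
        · exact hne j i hji q hqj hq
      have hnot2 : ¬ ∃ j, p ∈ Set.Icc (a j) (b j) ∧ u ∈ Set.Icc (a j) (b j) := by
        rintro ⟨j, hpj, huj⟩
        rcases eq_or_ne j i with rfl | hji
        · exact absurd huj.1 (not_le.mpr hau)
        · exact hne j i hji p hpj hp
      rw [hpu, hqu, hout u q hnot1, hout p u hnot2,
        inf_eq_right.mpr hau.le, inf_eq_left.mpr (hau.le.trans hq.1),
        inf_eq_right.mpr (hau.le.trans hp.1), sup_idem]
  · rw [hout p q h]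
    have hkey : op (p ⊓ u) q = p ⊓ q ⊓ u ∨ op p (q ⊓ u) = p ⊓ q ⊓ u := by
      by_cases h1 : ∃ j, p ⊓ u ∈ Set.Icc (a j) (b j) ∧ q ∈ Set.Icc (a j) (b j)
      · by_cases h2 : ∃ k, p ∈ Set.Icc (a k) (b k) ∧ q ⊓ u ∈ Set.Icc (a k) (b k)
        · exfalso
          obtain ⟨j, hpuj, hqj⟩ := h1
          obtain ⟨k, hpk, hquk⟩ := h2
          rcases eq_or_ne j k with rfl | hjk
          · exact h ⟨j, hpk, hqj⟩
          · have hpnj : p ∉ Set.Icc (a j) (b j) := hne k j hjk.symm p hpk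
            have hup : u < p := by
              by_contra hc
              push_neg at hc
              rw [inf_eq_left.mpr hc] at hpuj
              exact hpnj hpuj
            have huj : u ∈ Set.Icc (a j) (b j) := by
              rwa [inf_eq_right.mpr hup.le] at hpuj
            have hqnk : q ∉ Set.Icc (a k) (b k) := hne j k hjk q hqj
            have huq : u < q := by
              by_contra hc
              push_neg at hc
              rw [inf_eq_left.mpr hc] at hquk
              exact hqnk hquk
            have huk : u ∈ Set.Icc (a k) (b k) := by
              rwa [inf_eq_right.mpr huq.le] at hquk
            exact hne j k hjk u huj huk
        · right
          rw [hout p (q ⊓ u) h2, inf_assoc]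
      · left
        rw [hout (p ⊓ u) q h1, inf_right_comm]
    have hb1' : op (p ⊓ u) q ≤ p ⊓ q ⊓ u :=
      (hle _ _).trans (le_of_eq (inf_right_comm p u q))
    have hb2' : op p (q ⊓ u) ≤ p ⊓ q ⊓ u :=
      (hle _ _).trans (le_of_eq (inf_assoc p q u).symm)
    rcases hkey with hk | hk
    · rw [hk, sup_eq_left.mpr hb2']
    · rw [hk, sup_eq_right.mpr hb1']
end

section
/- Let & be a left continuous t-norm on [0,1] satisfying (p&q) ∧ u = ((p∧u)&q) ∨ (p&(q∧u)) for all p,q,u. Then for any set X and any map r : X×X→[0,1] with 1 ≤ r(x,x) and r(y,z)&r(x,y) ≤ r(x,z) for all x,y,z (i.e., (X,r) is a [0,1]-category), the identity (p&q) ∧ r(x,z) = ⨆_{y∈X} (p ∧ r(y,z)) & (q ∧ r(x,y)) holds for all p,q ∈ [0,1] and x,z ∈ X. -/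
open unitInterval

theorem stmt6 (op : I → I → I)
    (hcomm : ∀ x y, op x y = op y x)
    (hassoc : ∀ x y z, op (op x y) z = op x (op y z))
    (hmono : ∀ x y z w, x ≤ y → z ≤ w → op x z ≤ op y w)
    (hone : ∀ x, op 1 x = x)
    (hlc : ∀ (x : I) (S : Set I), op x (sSup S) = sSup (op x '' S))
    (hdist : ∀ p q u, op p q ⊓ u = op (p ⊓ u) q ⊔ op p (q ⊓ u))
    {X : Type*} (r : X → X → I)
    (hrefl : ∀ x, 1 ≤ r x x)
    (htrans : ∀ x y z, op (r y z) (r x y) ≤ r x z) :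
    ∀ (p q : I) (x z : X),
      op p q ⊓ r x z = ⨆ y : X, op (p ⊓ r y z) (q ⊓ r x y) := by
  intro p q x z
  apply le_antisymm
  · rw [hdist]
    apply sup_le
    · refine le_iSup_of_le x ?_
      have : q ⊓ r x x = q := inf_eq_left.2 (le_one'.trans (hrefl x))
      rw [this]
    · refine le_iSup_of_le z ?_
      have : p ⊓ r z z = p := inf_eq_left.2 (le_one'.trans (hrefl z))
      rw [this]
  · refine iSup_le fun y => le_inf ?_ ?_
    · exact hmono _ _ _ _ inf_le_left inf_le_left
    · exact (hmono _ _ _ _ inf_le_right inf_le_right).trans (htrans x y z)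
end

section
/- Let Q be a commutative quantale on a complete lattice with unit k, and suppose that for all p,q,u ∈ Q, (p&q) ∧ u = ((p∧u)&(q∧k)) ∨ ((p∧k)&(q∧u)). If the underlying lattice of Q is [0,1] with its usual order, then k = 1 (the quantale is integral). -/
open unitInterval

theorem stmt7 (op : I → I → I) (k : I)
    (hcomm : ∀ x y, op x y = op y x)
    (hassoc : ∀ x y z, op (op x y) z = op x (op y z))
    (hsup : ∀ (x : I) (S : Set I), op x (sSup S) = sSup (op x '' S))
    (hunit : ∀ x, op k x = x)
    (hdist : ∀ p q u : I,
      op p q ⊓ u = op (p ⊓ u) (q ⊓ k) ⊔ op (p ⊓ k) (q ⊓ u)) :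
    k = 1 := by
  have hk1 : k ≤ 1 := by exact_mod_cast k.2.2
  have step2 : ∀ q ∈ Set.Iio k, op 1 q = q := by
    intro q hq
    have hd := hdist 1 q k
    rw [inf_of_le_right hk1] at hd
    have hqk : q ⊓ k = q := inf_of_le_left hq.le
    rw [hqk, hunit, sup_idem] at hd
    rcases le_total (op 1 q) k with h | h
    · rwa [inf_of_le_left h] at hd
    · rw [inf_of_le_right h] at hd
      exact absurd hd.symm (ne_of_lt hq)
  have himg : op 1 '' Set.Iio k = Set.Iio k := by
    rw [Set.image_congr step2, Set.image_id']
  have hlub : sSup (Set.Iio k) = k := IsLUB.sSup_eq (α := I) isLUB_Iio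
  have hk : op 1 k = k := by rw [← hlub, hsup, himg, hlub]
  have h1 : op 1 k = 1 := by rw [hcomm, hunit]
  rw [h1] at hk
  exact hk.symm
end

section
/- Let Q be a commutative quantale on the complete lattice [0,1] with unit k, satisfying (p&q) ∧ u = ((p∧u)&(q∧k)) ∨ ((p∧k)&(q∧u)) for all p,q,u. Then (p&p)&(p&p) = p&p for all p ∈ [0,1], i.e. the &-square of every element is idempotent. -/
open unitInterval

theorem stmt8 (op : I → I → I) (k : I)
    (hcomm : ∀ x y, op x y = op y x)
    (hassoc : ∀ x y z, op (op x y) z = op x (op y z))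
    (hsup : ∀ (x : I) (S : Set I), op x (sSup S) = sSup (op x '' S))
    (hunit : ∀ x, op k x = x)
    (hdist : ∀ p q u : I,
      op p q ⊓ u = op (p ⊓ u) (q ⊓ k) ⊔ op (p ⊓ k) (q ⊓ u)) :
    ∀ p : I, op (op p p) (op p p) = op p p := by
  intro p
  have hok : ∀ x, op x k = x := fun x => by rw [hcomm, hunit]
  rcases le_total p k with hp | hp
  · -- case p ≤ k
    have hpk : p ⊓ k = p := inf_of_le_left hp
    have hkp : k ⊓ p = p := inf_of_le_right hp
    -- op p p ≤ p
    have hle : op p p ≤ p := by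
      have h := hdist p k p
      rw [hok, inf_idem, hpk, hkp, inf_idem, hok] at h
      -- h : p = p ⊔ op p p
      calc op p p ≤ p ⊔ op p p := le_sup_right
        _ = p := h.symm
    have hps : p ⊓ op p p = op p p := inf_of_le_right hle
    have key : op p p = op (op p p) p := by
      have h := hdist p p (op p p)
      rw [inf_idem, hps, hpk, hcomm p (op p p)] at h
      rw [sup_idem] at h
      exact h
    calc op (op p p) (op p p) = op (op (op p p) p) p := (hassoc _ p p).symm
      _ = op (op p p) p := congrArg (fun x => op x p) key.symm
      _ = op p p := key.symm
  · -- case k ≤ p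
    have hpk : p ⊓ k = k := inf_of_le_right hp
    have hge : p ≤ op p p := by
      have h := hdist p p p
      rw [inf_idem, hpk, hok, hunit, sup_idem] at h
      -- h : op p p ⊓ p = p
      calc p = op p p ⊓ p := h.symm
        _ ≤ op p p := inf_le_left
    have hle : op p p ≤ p := by
      have h := hdist p p (op p p)
      rw [inf_idem, hpk, hok, hunit, sup_idem, inf_of_le_left hge] at h
      exact h.le
    have : op p p = p := le_antisymm hle hge
    rw [this]
    exact this
end

section
/- Let (X,r) be a [0,1]-category over a left-continuous t-norm. A net {x_λ}_{λ∈D} has an element a as bilimit (meaning r(a,x) = sup_λ inf_{λ≤μ} r(x_μ,x) and r(x,a) = sup_λ inf_{λ≤μ} r(x,x_μ) for all x ∈ X) if and only if sup_λ inf_{λ≤μ} r(a,x_μ) = sup_λ inf_{λ≤μ} r(x_μ,a) = 1. -/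
open unitInterval

/-- A \`[0,1]\`-category structure on \`X\`. -/
def IsRCat {X : Type*} (op : I → I → I) (r : X → X → I) : Prop :=
  (∀ x, r x x = 1) ∧ ∀ x y z, op (r y z) (r x y) ≤ r x z

/-- A \`[0,1]\`-functor. -/
def IsRFunctor {X Y : Type*} (r : X → X → I) (s : Y → Y → I) (f : X → Y) : Prop :=
  ∀ x y, r x y ≤ s (f x) (f y)

/-- \`a\` is a bilimit of the net \`x\` (full definition). -/
def IsBilimit {X D : Type*} [Preorder D] (r : X → X → I) (x : D → X) (a : X) : Prop :=
  (∀ y, r a y = ⨆ l : D, ⨅ m : D, ⨅ _ : l ≤ m, r (x m) y) ∧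
  (∀ y, r y a = ⨆ l : D, ⨅ m : D, ⨅ _ : l ≤ m, r y (x m))

/-- \`a\` is a bilimit of the net \`x\` (sup-inf characterization). -/
def IsBilimitAux {X D : Type*} [Preorder D] (r : X → X → I) (x : D → X) (a : X) : Prop :=
  (⨆ l : D, ⨅ m : D, ⨅ _ : l ≤ m, r a (x m)) = 1 ∧
  (⨆ l : D, ⨅ m : D, ⨅ _ : l ≤ m, r (x m) a) = 1

/-- The net \`x\` is a Cauchy net. -/
def IsCauchyNet {X D : Type*} [Preorder D] (r : X → X → I) (x : D → X) : Prop :=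
  (⨆ l : D, ⨅ m : D, ⨅ _ : l ≤ m, ⨅ g : D, ⨅ _ : l ≤ g, r (x m) (x g)) = 1

theorem stmt12 (op : I → I → I)
    (hcomm : ∀ x y, op x y = op y x)
    (hassoc : ∀ x y z, op (op x y) z = op x (op y z))
    (hmono : ∀ x y z w, x ≤ y → z ≤ w → op x z ≤ op y w)
    (hone : ∀ x, op 1 x = x)
    (hlc : ∀ (x : I) (S : Set I), op x (sSup S) = sSup (op x '' S))
    {X : Type*} (r : X → X → I) (hr : IsRCat op r)
    {D : Type*} [Preorder D] [Nonempty D]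
    (hdir : ∀ l l' : D, ∃ m, l ≤ m ∧ l' ≤ m)
    (x : D → X) (a : X) :
    IsBilimit r x a ↔ IsBilimitAux r x a := by
  have opone' : ∀ b : I, op b 1 = b := fun b => by rw [hcomm, hone]
  have opSup : ∀ (b : I) (f : D → I), op b (⨆ l, f l) = ⨆ l, op b (f l) := by
    intro b f
    rw [iSup, hlc b, iSup]
    congr 1
    exact (Set.range_comp _ _).symm
  constructor
  · intro h
    exact ⟨by rw [← h.2 a, hr.1 a], by rw [← h.1 a, hr.1 a]⟩
  · rintro ⟨hS, hT⟩
    constructor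
    · intro y
      apply le_antisymm
      · calc r a y = op (r a y) 1 := (opone' _).symm
          _ = op (r a y) (⨆ l : D, ⨅ m : D, ⨅ _ : l ≤ m, r (x m) a) := by rw [hT]
          _ = ⨆ l : D, op (r a y) (⨅ m : D, ⨅ _ : l ≤ m, r (x m) a) := opSup _ _
          _ ≤ ⨆ l : D, ⨅ m : D, ⨅ _ : l ≤ m, r (x m) y := by
              refine iSup_mono fun l => le_iInf₂ fun m hm => ?_
              calc op (r a y) (⨅ m : D, ⨅ _ : l ≤ m, r (x m) a)
                  ≤ op (r a y) (r (x m) a) := hmono _ _ _ _ le_rfl (iInf₂_le m hm)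
                _ ≤ r (x m) y := hr.2 (x m) a y
      · refine iSup_le fun l => ?_
        have key : ∀ l' : D, op (⨅ m : D, ⨅ _ : l ≤ m, r (x m) y)
            (⨅ m : D, ⨅ _ : l' ≤ m, r a (x m)) ≤ r a y := by
          intro l'
          obtain ⟨m, hm, hm'⟩ := hdir l l'
          calc _ ≤ op (r (x m) y) (r a (x m)) :=
                hmono _ _ _ _ (iInf₂_le m hm) (iInf₂_le m hm')
            _ ≤ r a y := hr.2 a (x m) y
        have h2 := iSup_le key
        rwa [← opSup, hS, opone'] at h2
    · intro y
      apply le_antisymm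
      · calc r y a = op (r y a) 1 := (opone' _).symm
          _ = op (r y a) (⨆ l : D, ⨅ m : D, ⨅ _ : l ≤ m, r a (x m)) := by rw [hS]
          _ = ⨆ l : D, op (r y a) (⨅ m : D, ⨅ _ : l ≤ m, r a (x m)) := opSup _ _
          _ ≤ ⨆ l : D, ⨅ m : D, ⨅ _ : l ≤ m, r y (x m) := by
              refine iSup_mono fun l => le_iInf₂ fun m hm => ?_
              calc op (r y a) (⨅ m : D, ⨅ _ : l ≤ m, r a (x m))
                  ≤ op (r y a) (r a (x m)) := hmono _ _ _ _ le_rfl (iInf₂_le m hm)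
                _ = op (r a (x m)) (r y a) := hcomm _ _
                _ ≤ r y (x m) := hr.2 y a (x m)
      · refine iSup_le fun l => ?_
        have key : ∀ l' : D, op (⨅ m : D, ⨅ _ : l ≤ m, r y (x m))
            (⨅ m : D, ⨅ _ : l' ≤ m, r (x m) a) ≤ r y a := by
          intro l'
          obtain ⟨m, hm, hm'⟩ := hdir l l'
          calc _ ≤ op (r y (x m)) (r (x m) a) :=
                hmono _ _ _ _ (iInf₂_le m hm) (iInf₂_le m hm')
            _ = op (r (x m) a) (r y (x m)) := hcomm _ _
            _ ≤ r y a := hr.2 y (x m) a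
        have h2 := iSup_le key
        rwa [← opSup, hT, opone'] at h2
end

section
/- Let & be a left continuous t-norm on [0,1] arising from a family of pairwise disjoint closed intervals {[aᵢ,bᵢ] ⊆ [0,1)} via p&q = aᵢ if p,q ∈ [aᵢ,bᵢ] for some i and p&q = min(p,q) otherwise. Then the set E of idempotent elements strictly less than 1 has supremum 1, and for each p ∈ E and every x ∈ [0,1], p & x = min(p,x). -/
open unitInterval

theorem stmt18 (op : I → I → I)
    (hcomm : ∀ x y, op x y = op y x)
    (hassoc : ∀ x y z, op (op x y) z = op x (op y z))
    (hmono : ∀ x y z w, x ≤ y → z ≤ w → op x z ≤ op y w)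
    (hone : ∀ x, op 1 x = x)
    (hlc : ∀ (x : I) (S : Set I), op x (sSup S) = sSup (op x '' S))
    {ι : Type*} (a b : ι → I)
    (hab : ∀ i, a i ≤ b i) (hb1 : ∀ i, b i < 1)
    (hdisj : ∀ i j, i ≠ j → Set.Icc (a i) (b i) ∩ Set.Icc (a j) (b j) = ∅)
    (hin : ∀ i p q, p ∈ Set.Icc (a i) (b i) → q ∈ Set.Icc (a i) (b i) → op p q = a i)
    (hout : ∀ p q : I, (¬ ∃ i, p ∈ Set.Icc (a i) (b i) ∧ q ∈ Set.Icc (a i) (b i)) →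
      op p q = p ⊓ q) :
    sSup {p : I | p < 1 ∧ op p p = p} = 1 ∧
      ∀ p : I, p < 1 → op p p = p → ∀ x : I, op p x = p ⊓ x := by
  set E := {p : I | p < 1 ∧ op p p = p} with hE
  have haE : ∀ i, a i ∈ E := fun i =>
    ⟨lt_of_le_of_lt (hab i) (hb1 i), hin i _ _ ⟨le_refl _, hab i⟩ ⟨le_refl _, hab i⟩⟩
  have hnotin : ∀ t : I, t < 1 → (¬ ∃ i, t ∈ Set.Icc (a i) (b i)) → t ∈ E := by
    intro t ht hni
    refine ⟨ht, ?_⟩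
    rw [hout t t (by rintro ⟨i, hi, _⟩; exact hni ⟨i, hi⟩)]
    simp
  constructor
  · refine le_antisymm (sSup_le fun p _ => le_one') ?_
    by_contra hcon
    rw [not_le] at hcon
    set s := sSup E with hsdef
    have hs0 : (0:ℝ) ≤ (s:ℝ) := s.2.1
    have hs1 : (s:ℝ) < 1 := hcon
    set t : I := ⟨((s:ℝ)+1)/2, by constructor <;> linarith⟩ with htdef
    have hst : s < t := by rw [← Subtype.coe_lt_coe]; show (s:ℝ) < ((s:ℝ)+1)/2; linarith
    have ht1 : t < 1 := by rw [← Subtype.coe_lt_coe]; show ((s:ℝ)+1)/2 < 1; linarith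
    have htE : t ∉ E := fun h => absurd (le_sSup h) (not_le.mpr hst)
    have hex : ∃ j, t ∈ Set.Icc (a j) (b j) := by
      by_contra hn; exact htE (hnotin t ht1 hn)
    obtain ⟨j, htj⟩ := hex
    have hajs : a j ≤ s := le_sSup (haE j)
    have hbj0 : (0:ℝ) ≤ (b j : ℝ) := (b j).2.1
    have hbj1 : (b j : ℝ) < 1 := hb1 j
    set u : I := ⟨((b j : ℝ)+1)/2, by constructor <;> linarith⟩ with hudef
    have hbu : b j < u := by
      rw [← Subtype.coe_lt_coe]; show (b j : ℝ) < ((b j : ℝ)+1)/2; linarith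
    have hu1 : u < 1 := by
      rw [← Subtype.coe_lt_coe]; show ((b j : ℝ)+1)/2 < 1; linarith
    have hsu : s < u := lt_of_lt_of_le hst (le_trans htj.2 hbu.le)
    have huE : u ∉ E := fun h => absurd (le_sSup h) (not_le.mpr hsu)
    have hex2 : ∃ k, u ∈ Set.Icc (a k) (b k) := by
      by_contra hn; exact huE (hnotin u hu1 hn)
    obtain ⟨k, huk⟩ := hex2
    have haks : a k ≤ s := le_sSup (haE k)
    have htk : t ∈ Set.Icc (a k) (b k) :=
      ⟨le_trans haks hst.le, le_trans htj.2 (le_trans hbu.le huk.2)⟩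
    have hjk : j = k := by
      by_contra hne
      have := hdisj j k hne
      exact absurd (Set.mem_inter htj htk) (by rw [this]; exact Set.notMem_empty t)
    exact absurd (hjk ▸ huk.2) (not_le.mpr hbu)
  · intro p hp1 hpp x
    by_cases hcase : ∃ i, p ∈ Set.Icc (a i) (b i) ∧ x ∈ Set.Icc (a i) (b i)
    · obtain ⟨i, hpi, hxi⟩ := hcase
      have hpa : p = a i := hpp ▸ hin i p p hpi hpi
      rw [hin i p x hpi hxi, hpa]; exact (inf_eq_left.mpr hxi.1).symm
    · exact hout p x hcase
end

section
/- Let & be a left continuous t-norm on [0,1] and (X,r), (Y,s) two [0,1]-categories. For [0,1]-functors f,g : (X,r)→(Y,s) define d(f,g) = sup{q ∈ [0,1] : q ∧ r(x,y) ≤ s(f(x),g(y)) for all x,y ∈ X}. If & satisfies (p&q) ∧ u = ((p∧u)&q) ∨ (p&(q∧u)) for all p,q,u, then d is a [0,1]-categorical structure on the set of [0,1]-functors, i.e., d(f,f) = 1 and d(g,h) & d(f,g) ≤ d(f,h). -/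
open unitInterval

theorem stmt19 (op : I → I → I)
    (hcomm : ∀ x y, op x y = op y x)
    (hassoc : ∀ x y z, op (op x y) z = op x (op y z))
    (hmono : ∀ x y z w, x ≤ y → z ≤ w → op x z ≤ op y w)
    (hone : ∀ x, op 1 x = x)
    (hlc : ∀ (x : I) (S : Set I), op x (sSup S) = sSup (op x '' S))
    (hdist : ∀ p q u, op p q ⊓ u = op (p ⊓ u) q ⊔ op p (q ⊓ u))
    {X Y : Type*} (r : X → X → I) (s : Y → Y → I)
    (hr : IsRCat op r) (hs : IsRCat op s) :
    (∀ f : X → Y, IsRFunctor r s f →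
      sSup {q : I | ∀ x y, q ⊓ r x y ≤ s (f x) (f y)} = 1) ∧
    (∀ f g h : X → Y, IsRFunctor r s f → IsRFunctor r s g → IsRFunctor r s h →
      op (sSup {q : I | ∀ x y, q ⊓ r x y ≤ s (g x) (h y)})
         (sSup {q : I | ∀ x y, q ⊓ r x y ≤ s (f x) (g y)})
        ≤ sSup {q : I | ∀ x y, q ⊓ r x y ≤ s (f x) (h y)}) := by
  constructor
  · intro f hf
    refine le_antisymm le_one' (le_sSup ?_)
    exact fun x y => le_trans inf_le_right (hf x y)
  · intro f g h hf hg hh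
    apply le_sSup
    intro x y
    have key : ∀ p ∈ {q : I | ∀ x y, q ⊓ r x y ≤ s (g x) (h y)},
        ∀ q ∈ {q : I | ∀ x y, q ⊓ r x y ≤ s (f x) (g y)},
        op p q ⊓ r x y ≤ s (f x) (h y) := by
      intro p hp q hq
      rw [hdist]
      have hq' : q ≤ s (f x) (g x) := by
        have := hq x x; rw [hr.1 x, inf_eq_left.mpr le_one'] at this; exact this
      have hp' : p ≤ s (g y) (h y) := by
        have := hp y y; rw [hr.1 y, inf_eq_left.mpr le_one'] at this; exact this
      exact sup_le
        (le_trans (hmono _ _ _ _ (hp x y) hq') (hs.2 _ _ _))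
        (le_trans (hmono _ _ _ _ hp' (hq x y)) (hs.2 _ _ _))
    rw [hlc, sSup_inf_eq]
    apply iSup_le; intro z; apply iSup_le; rintro ⟨q, hq, rfl⟩
    rw [hcomm, hlc, sSup_inf_eq]
    apply iSup_le; intro w; apply iSup_le; rintro ⟨p, hp, rfl⟩
    rw [hcomm]
    exact key p hp q hq
end
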